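/- There exists a real-time quantum queue automaton M over input alphabet Σ = {a, b, 0, 1, c} with states Q = {q₀, q₁, q₂, q₃, q₄, q_acc1, q_acc2, q_r} and queue alphabet {A, B}, whose initial transition on the left end-marker # splits the computation into three paths each with amplitude 1/√3 — one path entering the rejecting state q_r immediately, one path (through q₁, q₃) enqueueing A for each a and B for each b of the prefix x and, after c, matching the suffix x against the queue, and one path (through q₂, q₄) enqueueing A for each 0 and B for each 1 of y and, after c, matching the second occurrence of y against the queue — such that M accepts every string of L_xy = { x y c y x : x ∈ {a, b}*, y ∈ {0, 1}* } with probability 2/3, and rejects every string not in L_xy with probability at least 2/3. -/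

import Mathlib

/-!
Real-time quantum queue automata (rtQQA) and real-time deterministic queue
automata (rtDQA).

An rtQQA reads its input `#w$` strictly left to right, one symbol per step.
Since the head position is determined by the time step, a configuration is a
pair (state, queue contents).  After each evolution step the machine is
measured: the squared amplitudes of configurations whose state is accepting
(resp. rejecting) are added to the acceptance (resp. rejection) probability,
and the non-halting part of the superposition continues.

STATEMENT 6: there is a concrete rtQQA with states
{q₀, q₁, q₂, q₃, q₄, q_acc1, q_acc2, q_r} and queue alphabet {A, B} whose
initial transition on the left end-marker # splits the computation into three
paths, each with amplitude 1/√3, accepting members of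
L_xy = { x y c y x | x ∈ {a,b}*, y ∈ {0,1}* } with probability 2/3 and
rejecting non-members with probability at least 2/3.
-/

namespace RTQ

/-- Queue operations: dequeue and enqueue. -/
inductive QOp : Type
  | deq | enq
  deriving DecidableEq

instance : Fintype QOp :=
  Fintype.ofList [QOp.deq, QOp.enq] (by intro x; cases x <;> simp)

/-- Tape symbols: the left end-marker `#`, the right end-marker `$`, or an
input symbol. -/
inductive TSym (A : Type) : Type
  | lend : TSym A
  | rend : TSym A
  | sym : A → TSym A

/-- A real-time quantum queue automaton with state set `Q`, queue alphabet `Γ`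
and input alphabet `A`.  The transition amplitude
`δ q σ z₁ zl q' z' op` depends on the current state `q`, the scanned tape
symbol `σ`, and the symbols `z₁`, `zl` at the front and rear of the queue
(`none` encodes the empty-queue symbol ⊥); the machine moves to state `q'`,
enqueues `z'` (or nothing, for `z' = none`, encoding τ) at the rear, performs
queue operation `op`, and the head always moves right. -/
structure RTQQA (Q Γ A : Type) : Type where
  init : Q
  acc : Finset Q
  rej : Finset Q
  δ : Q → TSym A → Option Γ → Option Γ → Q → Option Γ → QOp → ℂ

variable {Q Γ A : Type} [Fintype Q] [DecidableEq Q] [Fintype Γ]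

/-- Applying a queue operation: enqueue appends `z'` at the rear; dequeue
removes the front symbol (and appends `z'` at the rear, if `z' ≠ τ`). -/
def applyOp (l : List Γ) (z' : Option Γ) : QOp → List Γ
  | QOp.enq => l ++ z'.toList
  | QOp.deq => l.tail ++ z'.toList

/-- One evolution step applied to a single basis configuration. -/
noncomputable def stepConf (M : RTQQA Q Γ A) (σ : TSym A) (c : Q × List Γ) :
    (Q × List Γ) →₀ ℂ :=
  ∑ q' : Q, ∑ z' : Option Γ, ∑ op : QOp,
    M.δ c.1 σ c.2.head? c.2.getLast? q' z' op •
      Finsupp.single (q', applyOp c.2 z' op) 1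

/-- One evolution step applied to a superposition of configurations. -/
noncomputable def stepSup (M : RTQQA Q Γ A) (σ : TSym A)
    (v : (Q × List Γ) →₀ ℂ) : (Q × List Γ) →₀ ℂ :=
  v.sum fun c a => a • stepConf M σ c

/-- The probability mass of the accepting part of a superposition. -/
noncomputable def accMass (M : RTQQA Q Γ A) (v : (Q × List Γ) →₀ ℂ) : ℝ :=
  ∑ c ∈ v.support, if c.1 ∈ M.acc then Complex.normSq (v c) else 0

/-- The probability mass of the rejecting part of a superposition. -/
noncomputable def rejMass (M : RTQQA Q Γ A) (v : (Q × List Γ) →₀ ℂ) : ℝ :=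
  ∑ c ∈ v.support, if c.1 ∈ M.rej then Complex.normSq (v c) else 0

/-- Projection onto the non-halting subspace. -/
noncomputable def projNon (M : RTQQA Q Γ A) (v : (Q × List Γ) →₀ ℂ) :
    (Q × List Γ) →₀ ℂ :=
  v.filter fun c => c.1 ∉ M.acc ∧ c.1 ∉ M.rej

/-- Run of an rtQQA: repeatedly evolve, measure (accumulating the halting
probabilities) and continue with the non-halting part. -/
noncomputable def runAux (M : RTQQA Q Γ A) :
    List (TSym A) → ((Q × List Γ) →₀ ℂ) × ℝ × ℝ → ((Q × List Γ) →₀ ℂ) × ℝ × ℝ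
  | [], s => s
  | σ :: rest, s =>
      let v' := stepSup M σ s.1
      runAux M rest (projNon M v', s.2.1 + accMass M v', s.2.2 + rejMass M v')

/-- The probability that the rtQQA `M` accepts the input word `w` (the input
is written on the tape as `#w$`). -/
noncomputable def acceptProb (M : RTQQA Q Γ A) (w : List A) : ℝ :=
  (runAux M (TSym.lend :: (w.map TSym.sym ++ [TSym.rend]))
    (Finsupp.single (M.init, ([] : List Γ)) 1, 0, 0)).2.1

/-- The probability that the rtQQA `M` rejects the input word `w`. -/
noncomputable def rejectProb (M : RTQQA Q Γ A) (w : List A) : ℝ :=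
  (runAux M (TSym.lend :: (w.map TSym.sym ++ [TSym.rend]))
    (Finsupp.single (M.init, ([] : List Γ)) 1, 0, 0)).2.2

/-- Well-formedness (unitarity) condition for a real-time QQA: for each scanned
symbol and each pair of front/rear queue symbols, the columns of the transition
matrix are orthonormal. -/
def WellFormedRT (M : RTQQA Q Γ A) : Prop :=
  ∀ (σ : TSym A) (z₁ zl : Option Γ) (q₁ q₂ : Q),
    (∑ q' : Q, ∑ z' : Option Γ, ∑ op : QOp,
      (starRingEnd ℂ) (M.δ q₁ σ z₁ zl q' z' op) * M.δ q₂ σ z₁ zl q' z' op)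
      = if q₁ = q₂ then 1 else 0

end RTQ

/-- The five-letter input alphabet `{a, b, 0, 1, c}` (`z` stands for the digit
0 and `o` for the digit 1). -/
inductive AB01C : Type
  | a | b | z | o | c
  deriving DecidableEq

instance : Fintype AB01C :=
  Fintype.ofList [AB01C.a, AB01C.b, AB01C.z, AB01C.o, AB01C.c]
    (by intro x; cases x <;> simp)

/-- Encoding of a word `x ∈ {a, b}*` (`true ↦ a`, `false ↦ b`). -/
def encAB (x : List Bool) : List AB01C :=
  x.map fun t => if t then AB01C.a else AB01C.b

/-- Encoding of a word `y ∈ {0, 1}*` (`true ↦ 1`, `false ↦ 0`). -/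
def enc01 (y : List Bool) : List AB01C :=
  y.map fun t => if t then AB01C.o else AB01C.z

/-- The language `L_xy = { x y c y x : x ∈ {a, b}*, y ∈ {0, 1}* }`. -/
def Lxy : Set (List AB01C) :=
  { w | ∃ (x y : List Bool),
      w = encAB x ++ enc01 y ++ AB01C.c :: (enc01 y ++ encAB x) }

/-- The state set `{q₀, q₁, q₂, q₃, q₄, q_acc1, q_acc2, q_r}`. -/
inductive St2 : Type
  | q0 | q1 | q2 | q3 | q4 | qacc1 | qacc2 | qr
  deriving DecidableEq

instance : Fintype St2 :=
  Fintype.ofList [St2.q0, St2.q1, St2.q2, St2.q3, St2.q4, St2.qacc1, St2.qacc2,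
    St2.qr] (by intro x; cases x <;> simp)

/-- The queue alphabet `{A, B}`. -/
inductive QAB : Type
  | A | B
  deriving DecidableEq

instance : Fintype QAB :=
  Fintype.ofList [QAB.A, QAB.B] (by intro x; cases x <;> simp)

section Stage1
open RTQ St2 QAB RTQ.TSym RTQ.QOp AB01C

abbrev Tgt := St2 × Option QAB × RTQ.QOp
abbrev Cfg := St2 × List QAB

/-- deterministic transition table (single targets). -/
def Tf : St2 → RTQ.TSym AB01C → Option QAB → Tgt
  -- q1 phase
  | q1, sym a, _ => (q1, some A, enq)
  | q1, sym b, _ => (q1, some B, enq)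
  | q1, sym z, _ => (q1, none, enq)
  | q1, sym o, _ => (q1, none, enq)
  | q1, sym c, _ => (q3, none, enq)
  | q1, rend, _ => (qr, some A, enq)
  | q1, lend, _ => (q1, none, deq)
  -- q3 phase
  | q3, sym a, some A => (q3, none, deq)
  | q3, sym a, _ => (qr, some A, deq)
  | q3, sym b, some B => (q3, none, deq)
  | q3, sym b, _ => (qr, some A, deq)
  | q3, sym z, _ => (q3, none, enq)
  | q3, sym o, _ => (q3, none, enq)
  | q3, sym c, _ => (qr, some A, deq)
  | q3, rend, none => (qacc1, none, enq)
  | q3, rend, some _ => (qr, some A, deq)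
  | q3, lend, _ => (q3, none, deq)
  -- q2 phase
  | q2, sym a, none => (q2, none, enq)
  | q2, sym a, some _ => (qr, some B, enq)
  | q2, sym b, none => (q2, none, enq)
  | q2, sym b, some _ => (qr, some B, enq)
  | q2, sym z, _ => (q2, some A, enq)
  | q2, sym o, _ => (q2, some B, enq)
  | q2, sym c, _ => (q4, none, enq)
  | q2, rend, _ => (qr, some B, enq)
  | q2, lend, _ => (q2, none, deq)
  -- q4 phase
  | q4, sym z, some A => (q4, none, deq)
  | q4, sym z, _ => (qr, some B, deq)
  | q4, sym o, some B => (q4, none, deq)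
  | q4, sym o, _ => (qr, some B, deq)
  | q4, sym a, none => (q4, none, enq)
  | q4, sym a, some _ => (qr, some B, deq)
  | q4, sym b, none => (q4, none, enq)
  | q4, sym b, some _ => (qr, some B, deq)
  | q4, sym c, _ => (qr, some B, deq)
  | q4, rend, none => (qacc2, none, enq)
  | q4, rend, some _ => (qr, some B, deq)
  | q4, lend, _ => (q4, none, deq)
  -- junk
  | qr, lend, _ => (qr, none, deq)
  | qr, _, _ => (qr, none, enq)
  | q0, _, _ => (q0, none, deq)
  | qacc1, _, _ => (qacc1, none, deq)
  | qacc2, _, _ => (qacc2, none, deq)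

/-- the split targets of the initial transition -/
def Spl : Finset Tgt := {(qr, none, enq), (q1, none, enq), (q2, none, enq)}

noncomputable def kk : ℂ := ((Real.sqrt 3 : ℝ) : ℂ)⁻¹

noncomputable def Mδ (q : St2) (σ : RTQ.TSym AB01C) (z₁ zl : Option QAB)
    (q' : St2) (z' : Option QAB) (op : RTQ.QOp) : ℂ :=
  match q, σ, z₁, zl with
  | St2.q0, RTQ.TSym.lend, none, none =>
      if (q', z', op) ∈ Spl then kk else 0
  | q, σ, z₁, _ => if (q', z', op) = Tf q σ z₁ then 1 else 0

noncomputable def MM : RTQ.RTQQA St2 QAB AB01C :=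
  { init := St2.q0, acc := {St2.qacc1, St2.qacc2}, rej := {St2.qr}, δ := Mδ }

lemma Tf_inj (σ : RTQ.TSym AB01C) (z₁ : Option QAB) (p q : St2)
    (h : Tf p σ z₁ = Tf q σ z₁) : p = q := by
  cases σ with
  | lend => revert h; revert p q z₁; decide
  | rend => revert h; revert p q z₁; decide
  | sym s => cases s <;> (revert h; revert p q z₁; decide)

lemma Tf_not_mem_Spl_lend (q : St2) (z₁ : Option QAB) :
    Tf q RTQ.TSym.lend z₁ ∉ Spl := by revert q z₁; decide

lemma sum3_eq (F : St2 → Option QAB → RTQ.QOp → ℂ) :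
    (∑ q' : St2, ∑ z' : Option QAB, ∑ op : RTQ.QOp, F q' z' op)
      = ∑ t : Tgt, F t.1 t.2.1 t.2.2 := by
  rw [Fintype.sum_prod_type]
  exact Finset.sum_congr rfl fun q' _ => by rw [Fintype.sum_prod_type]

lemma dot_ind {ι : Type} [Fintype ι] [DecidableEq ι] (t₁ t₂ : ι) :
    (∑ i : ι, (starRingEnd ℂ) (if i = t₁ then 1 else 0) * (if i = t₂ then 1 else 0))
      = if t₁ = t₂ then 1 else 0 := by
  simp only [apply_ite (starRingEnd ℂ), map_one, map_zero, ite_mul, one_mul, zero_mul]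
  rw [Finset.sum_ite_eq' Finset.univ]
  simp

lemma conj_kk : (starRingEnd ℂ) kk = kk := by
  simp [kk]

lemma kk_mul_kk : kk * kk = 1 / 3 := by
  rw [kk, ← mul_inv]
  norm_cast
  rw [Real.mul_self_sqrt (by norm_num)]
  norm_num

lemma normSq_kk : Complex.normSq kk = 1 / 3 := by
  rw [kk, ← Complex.ofReal_inv, Complex.normSq_ofReal, ← mul_inv,
    Real.mul_self_sqrt (by norm_num)]
  norm_num

lemma MM_wf : RTQ.WellFormedRT MM := by
  have hM0 : ∀ t : Tgt, Mδ St2.q0 RTQ.TSym.lend none none t.1 t.2.1 t.2.2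
      = if t ∈ Spl then kk else 0 := by
    rintro ⟨a, b, c⟩; simp [Mδ]
  have hMn : ∀ (p : St2) (σ : RTQ.TSym AB01C) (z₁ zl : Option QAB),
      ¬(p = St2.q0 ∧ σ = RTQ.TSym.lend ∧ z₁ = none ∧ zl = none) →
      ∀ t : Tgt, Mδ p σ z₁ zl t.1 t.2.1 t.2.2 = if t = Tf p σ z₁ then 1 else 0 := by
    rintro p σ z₁ zl h ⟨a, b, c⟩
    cases p <;> cases σ <;> cases z₁ <;> cases zl <;> simp_all [Mδ, Prod.ext_iff]
  intro σ z₁ zl p q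
  show (∑ q' : St2, ∑ z' : Option QAB, ∑ op : RTQ.QOp,
      (starRingEnd ℂ) (Mδ p σ z₁ zl q' z' op) * Mδ q σ z₁ zl q' z' op) = _
  rw [sum3_eq (fun q' z' op =>
    (starRingEnd ℂ) (Mδ p σ z₁ zl q' z' op) * Mδ q σ z₁ zl q' z' op)]
  by_cases hp : p = St2.q0 ∧ σ = RTQ.TSym.lend ∧ z₁ = none ∧ zl = none
  · obtain ⟨hp0, hσ, hz1, hzl⟩ := hp
    subst hp0 hσ hz1 hzl
    by_cases hq : q = St2.q0
    · subst hq
      simp only [hM0]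
      have key : ∀ x : Tgt, (starRingEnd ℂ) (if x ∈ Spl then kk else 0)
          * (if x ∈ Spl then kk else 0) = if x ∈ Spl then kk * kk else 0 := by
        intro x; by_cases h : x ∈ Spl <;> simp [h, conj_kk]
      simp only [key]
      rw [Finset.sum_ite_mem, Finset.univ_inter, Finset.sum_const, kk_mul_kk]
      have h3 : Spl.card = 3 := by decide
      rw [h3]
      norm_num
    · have hq' : ¬(q = St2.q0 ∧ (RTQ.TSym.lend : RTQ.TSym AB01C) = RTQ.TSym.lend
          ∧ (none : Option QAB) = none ∧ (none : Option QAB) = none) := by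
        simp [hq]
      rw [if_neg (by simp [Ne.symm hq])]
      simp only [hM0, hMn q _ _ _ hq']
      have key : ∀ x : Tgt, (starRingEnd ℂ) (if x ∈ Spl then kk else 0)
          * (if x = Tf q RTQ.TSym.lend none then 1 else 0)
          = if x = Tf q RTQ.TSym.lend none then
              (if x ∈ Spl then kk else 0) else 0 := by
        intro x
        by_cases h : x = Tf q RTQ.TSym.lend none <;>
          simp [h, apply_ite (starRingEnd ℂ), conj_kk]
      simp only [key]
      rw [Finset.sum_ite_eq' Finset.univ]
      simp [Tf_not_mem_Spl_lend]
  · have hMp := hMn p σ z₁ zl hp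
    by_cases hq : q = St2.q0 ∧ σ = RTQ.TSym.lend ∧ z₁ = none ∧ zl = none
    · obtain ⟨hq0, hσ, hz1, hzl⟩ := hq
      subst hq0 hσ hz1 hzl
      have hpq : p ≠ St2.q0 := fun h => hp ⟨h, rfl, rfl, rfl⟩
      rw [if_neg hpq]
      simp only [hMp, hM0]
      have key : ∀ x : Tgt, (starRingEnd ℂ)
          (if x = Tf p RTQ.TSym.lend none then (1:ℂ) else 0)
          * (if x ∈ Spl then kk else 0)
          = if x = Tf p RTQ.TSym.lend none then
              (if x ∈ Spl then kk else 0) else 0 := by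
        intro x
        by_cases h : x = Tf p RTQ.TSym.lend none <;> simp [h]
      simp only [key]
      rw [Finset.sum_ite_eq' Finset.univ]
      simp [Tf_not_mem_Spl_lend]
    · have hMq := hMn q σ z₁ zl hq
      simp only [hMp, hMq]
      rw [dot_ind]
      by_cases h : p = q
      · simp [h]
      · rw [if_neg (fun ht => h (Tf_inj σ z₁ p q ht)), if_neg h]
end Stage1
section Stage2
open RTQ St2 QAB RTQ.TSym RTQ.QOp AB01C

lemma Mδ_normal (p : St2) (σ : RTQ.TSym AB01C) (z₁ zl : Option QAB)
    (hp : p ≠ St2.q0) (t : Tgt) :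
    Mδ p σ z₁ zl t.1 t.2.1 t.2.2 = if t = Tf p σ z₁ then 1 else 0 := by
  obtain ⟨a, b, c⟩ := t
  cases p <;> cases σ <;> cases z₁ <;> cases zl <;> simp_all [Mδ, Prod.ext_iff]

lemma sum3m {M : Type*} [AddCommMonoid M] (F : St2 → Option QAB → RTQ.QOp → M) :
    (∑ q' : St2, ∑ z' : Option QAB, ∑ op : RTQ.QOp, F q' z' op)
      = ∑ t : Tgt, F t.1 t.2.1 t.2.2 := by
  rw [Fintype.sum_prod_type]
  exact Finset.sum_congr rfl fun q' _ => by rw [Fintype.sum_prod_type]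

/-- deterministic evolution of a basis configuration -/
def detStep (cf : Cfg) (σ : RTQ.TSym AB01C) : Cfg :=
  ((Tf cf.1 σ cf.2.head?).1,
    RTQ.applyOp cf.2 (Tf cf.1 σ cf.2.head?).2.1 (Tf cf.1 σ cf.2.head?).2.2)

def dRun (cf : Cfg) (u : List (RTQ.TSym AB01C)) : Cfg := u.foldl detStep cf

@[simp] lemma dRun_nil (cf : Cfg) : dRun cf [] = cf := rfl
@[simp] lemma dRun_cons (cf : Cfg) (σ : RTQ.TSym AB01C) (u : List (RTQ.TSym AB01C)) :
    dRun cf (σ :: u) = dRun (detStep cf σ) u := rfl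

lemma stepConf_normal (σ : RTQ.TSym AB01C) (cf : Cfg) (h : cf.1 ≠ St2.q0) :
    RTQ.stepConf MM σ cf = Finsupp.single (detStep cf σ) 1 := by
  show (∑ q' : St2, ∑ z' : Option QAB, ∑ op : RTQ.QOp,
      Mδ cf.1 σ cf.2.head? cf.2.getLast? q' z' op •
        Finsupp.single (q', RTQ.applyOp cf.2 z' op) (1:ℂ)) = _
  rw [sum3m (fun q' z' op => Mδ cf.1 σ cf.2.head? cf.2.getLast? q' z' op •
        Finsupp.single (q', RTQ.applyOp cf.2 z' op) (1:ℂ))]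
  have : ∀ t : Tgt, Mδ cf.1 σ cf.2.head? cf.2.getLast? t.1 t.2.1 t.2.2 •
        Finsupp.single (t.1, RTQ.applyOp cf.2 t.2.1 t.2.2) (1:ℂ)
      = if t = Tf cf.1 σ cf.2.head? then
          Finsupp.single (t.1, RTQ.applyOp cf.2 t.2.1 t.2.2) (1:ℂ) else 0 := by
    intro t
    rw [Mδ_normal cf.1 σ _ _ h t]
    by_cases ht : t = Tf cf.1 σ cf.2.head? <;> simp [ht]
  simp only [this]
  rw [Finset.sum_ite_eq' Finset.univ]
  simp [detStep]

lemma stepConf_init :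
    RTQ.stepConf MM RTQ.TSym.lend ((St2.q0, []) : Cfg)
      = Finsupp.single ((St2.qr, []) : Cfg) kk
        + Finsupp.single ((St2.q1, []) : Cfg) kk
        + Finsupp.single ((St2.q2, []) : Cfg) kk := by
  show (∑ q' : St2, ∑ z' : Option QAB, ∑ op : RTQ.QOp,
      Mδ St2.q0 RTQ.TSym.lend ([] : List QAB).head? ([] : List QAB).getLast? q' z' op •
        Finsupp.single (q', RTQ.applyOp [] z' op) (1:ℂ)) = _
  rw [sum3m (fun q' z' op => Mδ St2.q0 RTQ.TSym.lend ([] : List QAB).head?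
      ([] : List QAB).getLast? q' z' op • Finsupp.single (q', RTQ.applyOp [] z' op) (1:ℂ))]
  have : ∀ t : Tgt, Mδ St2.q0 RTQ.TSym.lend ([] : List QAB).head?
        ([] : List QAB).getLast? t.1 t.2.1 t.2.2 •
        Finsupp.single (t.1, RTQ.applyOp [] t.2.1 t.2.2) (1:ℂ)
      = if t ∈ Spl then kk • Finsupp.single (t.1, RTQ.applyOp [] t.2.1 t.2.2) (1:ℂ) else 0 := by
    rintro ⟨a, b, c⟩
    by_cases ht : ((a,b,c) : Tgt) ∈ Spl <;> simp [Mδ, ht]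
  simp only [this]
  rw [Finset.sum_ite_mem, Finset.univ_inter]
  rw [show Spl = {((St2.qr, none, RTQ.QOp.enq) : Tgt), (St2.q1, none, RTQ.QOp.enq),
      (St2.q2, none, RTQ.QOp.enq)} from rfl]
  rw [Finset.sum_insert (by decide), Finset.sum_insert (by decide), Finset.sum_singleton]
  simp [RTQ.applyOp, Finsupp.smul_single, add_assoc]

lemma stepSup_zero (σ : RTQ.TSym AB01C) : RTQ.stepSup MM σ 0 = 0 :=
  Finsupp.sum_zero_index

lemma stepSup_add (σ : RTQ.TSym AB01C) (u v : Cfg →₀ ℂ) :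
    RTQ.stepSup MM σ (u + v) = RTQ.stepSup MM σ u + RTQ.stepSup MM σ v :=
  Finsupp.sum_add_index' (fun c => zero_smul ℂ _) (fun c a b => add_smul a b _)

lemma stepSup_single (σ : RTQ.TSym AB01C) (cf : Cfg) (x : ℂ) :
    RTQ.stepSup MM σ (Finsupp.single cf x) = x • RTQ.stepConf MM σ cf :=
  Finsupp.sum_single_index (zero_smul ℂ _)

lemma smul_single_one (cf : Cfg) (x : ℂ) :
    x • Finsupp.single cf (1:ℂ) = Finsupp.single cf x := by
  rw [Finsupp.smul_single, smul_eq_mul, mul_one]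

lemma accMass_single (cf : Cfg) (x : ℂ) :
    RTQ.accMass MM (Finsupp.single cf x)
      = if cf.1 ∈ MM.acc then Complex.normSq x else 0 := by
  by_cases hx : x = 0
  · simp [RTQ.accMass, hx]
  · rw [RTQ.accMass, Finsupp.support_single_ne_zero _ hx, Finset.sum_singleton,
      Finsupp.single_eq_same]

lemma rejMass_single (cf : Cfg) (x : ℂ) :
    RTQ.rejMass MM (Finsupp.single cf x)
      = if cf.1 ∈ MM.rej then Complex.normSq x else 0 := by
  by_cases hx : x = 0
  · simp [RTQ.rejMass, hx]
  · rw [RTQ.rejMass, Finsupp.support_single_ne_zero _ hx, Finset.sum_singleton,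
      Finsupp.single_eq_same]

lemma accMass_pair (c1 c2 : Cfg) (h : c1 ≠ c2) (x y : ℂ) :
    RTQ.accMass MM (Finsupp.single c1 x + Finsupp.single c2 y)
      = (if c1.1 ∈ MM.acc then Complex.normSq x else 0)
        + (if c2.1 ∈ MM.acc then Complex.normSq y else 0) := by
  have hsub : (Finsupp.single c1 x + Finsupp.single c2 y).support ⊆ {c1, c2} := by
    refine Finsupp.support_add.trans ?_
    intro t ht
    rcases Finset.mem_union.mp ht with ht | ht
    · have h1 := Finsupp.support_single_subset ht
      simp only [Finset.mem_singleton] at h1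
      simp [h1]
    · have h1 := Finsupp.support_single_subset ht
      simp only [Finset.mem_singleton] at h1
      simp [h1]
  rw [RTQ.accMass, Finset.sum_subset hsub (by
    intro t _ ht
    rw [Finsupp.notMem_support_iff.mp ht]
    simp)]
  rw [Finset.sum_pair h]
  have h1 : (Finsupp.single c1 x + Finsupp.single c2 y) c1 = x := by
    simp [Finsupp.single_apply, h, Ne.symm h]
  have h2 : (Finsupp.single c1 x + Finsupp.single c2 y) c2 = y := by
    simp [Finsupp.single_apply, h]
  rw [h1, h2]

lemma rejMass_pair (c1 c2 : Cfg) (h : c1 ≠ c2) (x y : ℂ) :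
    RTQ.rejMass MM (Finsupp.single c1 x + Finsupp.single c2 y)
      = (if c1.1 ∈ MM.rej then Complex.normSq x else 0)
        + (if c2.1 ∈ MM.rej then Complex.normSq y else 0) := by
  have hsub : (Finsupp.single c1 x + Finsupp.single c2 y).support ⊆ {c1, c2} := by
    refine Finsupp.support_add.trans ?_
    intro t ht
    rcases Finset.mem_union.mp ht with ht | ht
    · have h1 := Finsupp.support_single_subset ht
      simp only [Finset.mem_singleton] at h1
      simp [h1]
    · have h1 := Finsupp.support_single_subset ht
      simp only [Finset.mem_singleton] at h1
      simp [h1]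
  rw [RTQ.rejMass, Finset.sum_subset hsub (by
    intro t _ ht
    rw [Finsupp.notMem_support_iff.mp ht]
    simp)]
  rw [Finset.sum_pair h]
  have h1 : (Finsupp.single c1 x + Finsupp.single c2 y) c1 = x := by
    simp [Finsupp.single_apply, h, Ne.symm h]
  have h2 : (Finsupp.single c1 x + Finsupp.single c2 y) c2 = y := by
    simp [Finsupp.single_apply, h]
  rw [h1, h2]

end Stage2
section Stage3
open RTQ St2 QAB RTQ.TSym RTQ.QOp AB01C

def good1 (cf : Cfg) : Prop := cf.1 = St2.q1 ∨ cf.1 = St2.q3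
def good2 (cf : Cfg) : Prop := cf.1 = St2.q2 ∨ cf.1 = St2.q4

lemma getLast?_app (l : List QAB) (a : QAB) : (l ++ [a]).getLast? = some a := by
  rw [List.getLast?_append_cons]; rfl

lemma getLast?_cons_app (x : QAB) (l : List QAB) (a : QAB) :
    (x :: (l ++ [a])).getLast? = some a := by
  rw [← List.cons_append, List.getLast?_append_cons]; rfl

lemma class1 (q : St2) (l : List QAB) (σ : RTQ.TSym AB01C)
    (h : q = St2.q1 ∨ q = St2.q3) :
    good1 (detStep (q, l) σ) ∨ (detStep (q, l) σ).1 = St2.qacc1 ∨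
      ((detStep (q, l) σ).1 = St2.qr ∧ (detStep (q, l) σ).2.getLast? = some QAB.A) := by
  rcases h with rfl | rfl <;> rcases l with _ | ⟨_ | _, t⟩ <;>
    rcases σ with _ | _ | (_ | _ | _ | _ | _) <;>
    simp [detStep, Tf, good1, RTQ.applyOp, getLast?_app, getLast?_cons_app]

lemma class2 (q : St2) (l : List QAB) (σ : RTQ.TSym AB01C)
    (h : q = St2.q2 ∨ q = St2.q4) :
    good2 (detStep (q, l) σ) ∨ (detStep (q, l) σ).1 = St2.qacc2 ∨
      ((detStep (q, l) σ).1 = St2.qr ∧ (detStep (q, l) σ).2.getLast? = some QAB.B) := by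
  rcases h with rfl | rfl <;> rcases l with _ | ⟨_ | _, t⟩ <;>
    rcases σ with _ | _ | (_ | _ | _ | _ | _) <;>
    simp [detStep, Tf, good2, RTQ.applyOp, getLast?_app, getLast?_cons_app]

lemma detStep_halt (cf : Cfg) (σ : RTQ.TSym AB01C)
    (h : cf.1 = St2.qr ∨ cf.1 = St2.qacc1 ∨ cf.1 = St2.qacc2) :
    (detStep cf σ).1 = cf.1 := by
  obtain ⟨q, l⟩ := cf
  rcases h with h | h | h <;> (dsimp only at h; subst h) <;>
    rcases σ with _ | _ | (_ | _ | _ | _ | _) <;> simp [detStep, Tf]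

lemma dRun_halt (u : List (RTQ.TSym AB01C)) : ∀ cf : Cfg,
    (cf.1 = St2.qr ∨ cf.1 = St2.qacc1 ∨ cf.1 = St2.qacc2) → (dRun cf u).1 = cf.1 := by
  induction u with
  | nil => intro cf _; rfl
  | cons σ rest ih =>
      intro cf h
      rw [dRun_cons]
      rw [ih (detStep cf σ) (by rw [detStep_halt cf σ h]; exact h)]
      exact detStep_halt cf σ h

lemma MMacc : MM.acc = {St2.qacc1, St2.qacc2} := rfl
lemma MMrej : MM.rej = {St2.qr} := rfl

lemma nonh_good (q : St2) (h : q = St2.q1 ∨ q = St2.q2 ∨ q = St2.q3 ∨ q = St2.q4) :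
    q ∉ MM.acc ∧ q ∉ MM.rej := by
  rw [MMacc, MMrej]; rcases h with rfl | rfl | rfl | rfl <;> decide

lemma projNon_add (u v : Cfg →₀ ℂ) :
    RTQ.projNon MM (u + v) = RTQ.projNon MM u + RTQ.projNon MM v :=
  Finsupp.filter_add

lemma projNon_zero : RTQ.projNon MM (0 : Cfg →₀ ℂ) = 0 := by
  rw [RTQ.projNon, Finsupp.filter_zero]

lemma projNon_single_pos (cf : Cfg) (x : ℂ) (h : cf.1 ∉ MM.acc ∧ cf.1 ∉ MM.rej) :
    RTQ.projNon MM (Finsupp.single cf x) = Finsupp.single cf x :=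
  Finsupp.filter_single_of_pos _ h

lemma projNon_single_neg (cf : Cfg) (x : ℂ) (h : ¬(cf.1 ∉ MM.acc ∧ cf.1 ∉ MM.rej)) :
    RTQ.projNon MM (Finsupp.single cf x) = 0 :=
  Finsupp.filter_single_of_neg _ h

lemma accMass_zero : RTQ.accMass MM (0 : Cfg →₀ ℂ) = 0 := by simp [RTQ.accMass]
lemma rejMass_zero : RTQ.rejMass MM (0 : Cfg →₀ ℂ) = 0 := by simp [RTQ.rejMass]

lemma key0 (u : List (RTQ.TSym AB01C)) (acc rej : ℝ) :
    RTQ.runAux MM u (0, acc, rej) = (0, acc, rej) := by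
  induction u generalizing acc rej with
  | nil => rfl
  | cons σ rest ih =>
      rw [RTQ.runAux]
      simp only [stepSup_zero, projNon_zero, accMass_zero, rejMass_zero, add_zero]
      exact ih acc rej

lemma keyOne (good : Cfg → Prop)
    (hg : ∀ cf : Cfg, good cf → cf.1 = St2.q1 ∨ cf.1 = St2.q2 ∨ cf.1 = St2.q3 ∨ cf.1 = St2.q4)
    (hc : ∀ (cf : Cfg) (σ : RTQ.TSym AB01C), good cf → good (detStep cf σ) ∨
      (detStep cf σ).1 = St2.qacc1 ∨ (detStep cf σ).1 = St2.qacc2 ∨ (detStep cf σ).1 = St2.qr)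
    (u : List (RTQ.TSym AB01C)) : ∀ (cf : Cfg) (acc rej : ℝ), good cf →
    (RTQ.runAux MM u (Finsupp.single cf kk, acc, rej)).2
      = (acc + (if (dRun cf u).1 ∈ MM.acc then 1/3 else 0),
         rej + (if (dRun cf u).1 ∈ MM.rej then 1/3 else 0)) := by
  induction u with
  | nil =>
      intro cf acc rej hcf
      obtain ⟨hna, hnr⟩ := nonh_good cf.1 (hg cf hcf)
      simp [RTQ.runAux, hna, hnr]
  | cons σ rest ih =>
      intro cf acc rej hcf
      have hne : cf.1 ≠ St2.q0 := by rcases hg cf hcf with h | h | h | h <;> simp [h]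
      rw [RTQ.runAux]
      simp only [stepSup_single, stepConf_normal σ cf hne, smul_single_one,
        accMass_single, rejMass_single, normSq_kk]
      set d := detStep cf σ with hd
      rcases hc cf σ hcf with hgood | hhalt
      · obtain ⟨hna, hnr⟩ := nonh_good d.1 (hg d hgood)
        rw [projNon_single_pos d kk ⟨hna, hnr⟩, if_neg hna, if_neg hnr]
        rw [ih d (acc + 0) (rej + 0) hgood]
        simp only [dRun_cons, ← hd, add_zero]
      · have hh : d.1 = St2.qr ∨ d.1 = St2.qacc1 ∨ d.1 = St2.qacc2 := by tauto
        rw [projNon_single_neg d kk (by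
          rcases hh with h | h | h <;> simp [h, MMacc, MMrej])]
        rw [key0]
        have hfin : (dRun d rest).1 = d.1 := dRun_halt rest d hh
        rcases hh with h | h | h <;>
          simp [dRun_cons, ← hd, hfin, h, MMacc, MMrej]

lemma good_disj (d1 d2 : Cfg)
    (h1 : good1 d1 ∨ d1.1 = St2.qacc1 ∨ (d1.1 = St2.qr ∧ d1.2.getLast? = some QAB.A))
    (h2 : good2 d2 ∨ d2.1 = St2.qacc2 ∨ (d2.1 = St2.qr ∧ d2.2.getLast? = some QAB.B)) :
    d1 ≠ d2 := by
  intro he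
  subst he
  rcases h1 with (h1 | h1) | h1 | ⟨h1, h1'⟩ <;>
    rcases h2 with (h2 | h2) | h2 | ⟨h2, h2'⟩ <;> simp_all

lemma memA1 : (St2.qacc1 ∈ MM.acc) = True := by simp [MMacc]
lemma memA2 : (St2.qacc2 ∈ MM.acc) = True := by simp [MMacc]
lemma memAr : (St2.qr ∈ MM.acc) = False := by simp [MMacc]
lemma memR1 : (St2.qacc1 ∈ MM.rej) = False := by simp [MMrej]
lemma memR2 : (St2.qacc2 ∈ MM.rej) = False := by simp [MMrej]
lemma memRr : (St2.qr ∈ MM.rej) = True := by simp [MMrej]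

set_option maxHeartbeats 1000000 in
lemma keyTwo (u : List (RTQ.TSym AB01C)) : ∀ (c1 c2 : Cfg) (acc rej : ℝ),
    good1 c1 → good2 c2 →
    (RTQ.runAux MM u (Finsupp.single c1 kk + Finsupp.single c2 kk, acc, rej)).2
      = (acc + (if (dRun c1 u).1 ∈ MM.acc then 1/3 else 0)
             + (if (dRun c2 u).1 ∈ MM.acc then 1/3 else 0),
         rej + (if (dRun c1 u).1 ∈ MM.rej then 1/3 else 0)
             + (if (dRun c2 u).1 ∈ MM.rej then 1/3 else 0)) := by
  have hg1 : ∀ cf : Cfg, good1 cf →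
      cf.1 = St2.q1 ∨ cf.1 = St2.q2 ∨ cf.1 = St2.q3 ∨ cf.1 = St2.q4 := by
    intro cf h; rcases h with h | h <;> simp [h]
  have hg2 : ∀ cf : Cfg, good2 cf →
      cf.1 = St2.q1 ∨ cf.1 = St2.q2 ∨ cf.1 = St2.q3 ∨ cf.1 = St2.q4 := by
    intro cf h; rcases h with h | h <;> simp [h]
  have hc1 : ∀ (cf : Cfg) (σ : RTQ.TSym AB01C), good1 cf → good1 (detStep cf σ) ∨
      (detStep cf σ).1 = St2.qacc1 ∨ (detStep cf σ).1 = St2.qacc2 ∨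
      (detStep cf σ).1 = St2.qr := by
    intro cf σ h
    rcases class1 cf.1 cf.2 σ h with h' | h' | ⟨h', _⟩ <;> tauto
  have hc2 : ∀ (cf : Cfg) (σ : RTQ.TSym AB01C), good2 cf → good2 (detStep cf σ) ∨
      (detStep cf σ).1 = St2.qacc1 ∨ (detStep cf σ).1 = St2.qacc2 ∨
      (detStep cf σ).1 = St2.qr := by
    intro cf σ h
    rcases class2 cf.1 cf.2 σ h with h' | h' | ⟨h', _⟩ <;> tauto
  induction u with
  | nil =>
      intro c1 c2 acc rej h1 h2
      obtain ⟨ha1, hr1⟩ := nonh_good c1.1 (hg1 c1 h1)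
      obtain ⟨ha2, hr2⟩ := nonh_good c2.1 (hg2 c2 h2)
      simp [RTQ.runAux, ha1, hr1, ha2, hr2]
  | cons σ rest ih =>
      intro c1 c2 acc rej h1 h2
      have hne1 : c1.1 ≠ St2.q0 := by rcases h1 with h | h <;> simp [h]
      have hne2 : c2.1 ≠ St2.q0 := by rcases h2 with h | h <;> simp [h]
      rw [RTQ.runAux]
      simp only [stepSup_add, stepSup_single, stepConf_normal σ c1 hne1,
        stepConf_normal σ c2 hne2, smul_single_one]
      set d1 := detStep c1 σ with hd1
      set d2 := detStep c2 σ with hd2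
      have hcl1 := class1 c1.1 c1.2 σ h1
      have hcl2 := class2 c2.1 c2.2 σ h2
      have hd12 : d1 ≠ d2 := good_disj d1 d2 hcl1 hcl2
      rw [accMass_pair d1 d2 hd12, rejMass_pair d1 d2 hd12, projNon_add]
      simp only [normSq_kk]
      rcases hc1 c1 σ h1 with hgood1 | hhalt1 <;> rcases hc2 c2 σ h2 with hgood2 | hhalt2
      · obtain ⟨ha1, hr1⟩ := nonh_good d1.1 (hg1 d1 hgood1)
        obtain ⟨ha2, hr2⟩ := nonh_good d2.1 (hg2 d2 hgood2)
        rw [projNon_single_pos d1 kk ⟨ha1, hr1⟩, projNon_single_pos d2 kk ⟨ha2, hr2⟩,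
          if_neg ha1, if_neg ha2, if_neg hr1, if_neg hr2]
        rw [ih d1 d2 _ _ hgood1 hgood2]
        simp only [dRun_cons, ← hd1, ← hd2, Prod.mk.injEq]
        all_goals exact ⟨by ring, by ring⟩
      · -- path 2 halts, path 1 continues
        have hh2 : d2.1 = St2.qr ∨ d2.1 = St2.qacc1 ∨ d2.1 = St2.qacc2 := by
          rcases hhalt2 with h | h | h
          exacts [Or.inr (Or.inl h), Or.inr (Or.inr h), Or.inl h]
        obtain ⟨ha1, hr1⟩ := nonh_good d1.1 (hg1 d1 hgood1)
        rw [projNon_single_pos d1 kk ⟨ha1, hr1⟩,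
          projNon_single_neg d2 kk (by rcases hh2 with h | h | h <;> simp [h, MMacc, MMrej]),
          add_zero]
        rw [if_neg ha1, if_neg hr1]
        rw [keyOne good1 hg1 hc1 rest d1 _ _ hgood1]
        have hfin2 : (dRun d2 rest).1 = d2.1 := dRun_halt rest d2 hh2
        simp only [dRun_cons, ← hd1, ← hd2, hfin2, Prod.mk.injEq]
        exact ⟨by ring, by ring⟩
      · -- path 1 halts, path 2 continues
        have hh1 : d1.1 = St2.qr ∨ d1.1 = St2.qacc1 ∨ d1.1 = St2.qacc2 := by
          rcases hhalt1 with h | h | h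
          exacts [Or.inr (Or.inl h), Or.inr (Or.inr h), Or.inl h]
        obtain ⟨ha2, hr2⟩ := nonh_good d2.1 (hg2 d2 hgood2)
        rw [projNon_single_pos d2 kk ⟨ha2, hr2⟩,
          projNon_single_neg d1 kk (by rcases hh1 with h | h | h <;> simp [h, MMacc, MMrej]),
          zero_add]
        rw [if_neg ha2, if_neg hr2]
        rw [keyOne good2 hg2 hc2 rest d2 _ _ hgood2]
        have hfin1 : (dRun d1 rest).1 = d1.1 := dRun_halt rest d1 hh1
        simp only [dRun_cons, ← hd1, ← hd2, hfin1, Prod.mk.injEq]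
        exact ⟨by ring, by ring⟩
      · have hh1 : d1.1 = St2.qr ∨ d1.1 = St2.qacc1 ∨ d1.1 = St2.qacc2 := by
          rcases hhalt1 with h | h | h
          exacts [Or.inr (Or.inl h), Or.inr (Or.inr h), Or.inl h]
        have hh2 : d2.1 = St2.qr ∨ d2.1 = St2.qacc1 ∨ d2.1 = St2.qacc2 := by
          rcases hhalt2 with h | h | h
          exacts [Or.inr (Or.inl h), Or.inr (Or.inr h), Or.inl h]
        rw [projNon_single_neg d1 kk (by rcases hh1 with h | h | h <;> simp [h, MMacc, MMrej]),
          projNon_single_neg d2 kk (by rcases hh2 with h | h | h <;> simp [h, MMacc, MMrej]),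
          add_zero, key0]
        have hfin1 : (dRun d1 rest).1 = d1.1 := dRun_halt rest d1 hh1
        have hfin2 : (dRun d2 rest).1 = d2.1 := dRun_halt rest d2 hh2
        simp only [dRun_cons, ← hd1, ← hd2, hfin1, hfin2, Prod.mk.injEq]
        exact ⟨by ring, by ring⟩

end Stage3
section Stage4
open RTQ St2 QAB RTQ.TSym RTQ.QOp AB01C

lemma accMass_triple (c1 c2 c3 : Cfg) (h12 : c1 ≠ c2) (h13 : c1 ≠ c3) (h23 : c2 ≠ c3)
    (x y z : ℂ) (ha1 : c1.1 ∉ MM.acc) (ha2 : c2.1 ∉ MM.acc) (ha3 : c3.1 ∉ MM.acc) :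
    RTQ.accMass MM (Finsupp.single c1 x + Finsupp.single c2 y + Finsupp.single c3 z) = 0 := by
  rw [RTQ.accMass]
  apply Finset.sum_eq_zero
  intro c hc
  have hmem : c ∈ ({c1, c2, c3} : Finset Cfg) := by
    have h1 := Finsupp.support_add hc
    rcases Finset.mem_union.mp h1 with h | h
    · rcases Finset.mem_union.mp (Finsupp.support_add h) with h' | h'
      · have := Finsupp.support_single_subset h'
        simp only [Finset.mem_singleton] at this
        simp [this]
      · have := Finsupp.support_single_subset h'
        simp only [Finset.mem_singleton] at this
        simp [this]
    · have := Finsupp.support_single_subset h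
      simp only [Finset.mem_singleton] at this
      simp [this]
  rcases Finset.mem_insert.mp hmem with h | h
  · subst h; simp [ha1]
  rcases Finset.mem_insert.mp h with h | h
  · subst h; simp [ha2]
  · have := Finset.mem_singleton.mp h; subst this; simp [ha3]

lemma rejMass_init :
    RTQ.rejMass MM (Finsupp.single ((St2.qr, []) : Cfg) kk
      + Finsupp.single ((St2.q1, []) : Cfg) kk
      + Finsupp.single ((St2.q2, []) : Cfg) kk) = 1/3 := by
  rw [RTQ.rejMass]
  have hsub : (Finsupp.single ((St2.qr, []) : Cfg) kk
      + Finsupp.single ((St2.q1, []) : Cfg) kk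
      + Finsupp.single ((St2.q2, []) : Cfg) kk).support
      ⊆ ({((St2.qr, []) : Cfg), ((St2.q1, []) : Cfg), ((St2.q2, []) : Cfg)} : Finset Cfg) := by
    intro c hc
    have h1 := Finsupp.support_add hc
    rcases Finset.mem_union.mp h1 with h | h
    · rcases Finset.mem_union.mp (Finsupp.support_add h) with h' | h'
      · have := Finsupp.support_single_subset h'
        simp only [Finset.mem_singleton] at this
        simp [this]
      · have := Finsupp.support_single_subset h'
        simp only [Finset.mem_singleton] at this
        simp [this]
    · have := Finsupp.support_single_subset h
      simp only [Finset.mem_singleton] at this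
      simp [this]
  rw [Finset.sum_subset hsub (by
    intro t _ ht
    rw [Finsupp.notMem_support_iff.mp ht]
    simp)]
  rw [Finset.sum_insert (by decide), Finset.sum_insert (by decide), Finset.sum_singleton]
  have e1 : (Finsupp.single ((St2.qr, []) : Cfg) kk
      + Finsupp.single ((St2.q1, []) : Cfg) kk
      + Finsupp.single ((St2.q2, []) : Cfg) kk) ((St2.qr, []) : Cfg) = kk := by
    simp [Finsupp.single_apply]
  have e2 : (Finsupp.single ((St2.qr, []) : Cfg) kk
      + Finsupp.single ((St2.q1, []) : Cfg) kk
      + Finsupp.single ((St2.q2, []) : Cfg) kk) ((St2.q1, []) : Cfg) = kk := by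
    simp [Finsupp.single_apply]
  have e3 : (Finsupp.single ((St2.qr, []) : Cfg) kk
      + Finsupp.single ((St2.q1, []) : Cfg) kk
      + Finsupp.single ((St2.q2, []) : Cfg) kk) ((St2.q2, []) : Cfg) = kk := by
    simp [Finsupp.single_apply]
  rw [e1, e2, e3]
  rw [if_pos (by rw [MMrej]; decide), if_neg (by rw [MMrej]; decide),
    if_neg (by rw [MMrej]; decide), normSq_kk]
  ring

def fin1 (w : List AB01C) : St2 :=
  (dRun ((St2.q1, []) : Cfg) (w.map RTQ.TSym.sym ++ [RTQ.TSym.rend])).1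
def fin2 (w : List AB01C) : St2 :=
  (dRun ((St2.q2, []) : Cfg) (w.map RTQ.TSym.sym ++ [RTQ.TSym.rend])).1

lemma probs_eq (w : List AB01C) :
    RTQ.acceptProb MM w
        = (if fin1 w ∈ MM.acc then 1/3 else 0) + (if fin2 w ∈ MM.acc then 1/3 else 0)
      ∧ RTQ.rejectProb MM w
        = 1/3 + (if fin1 w ∈ MM.rej then 1/3 else 0) + (if fin2 w ∈ MM.rej then 1/3 else 0) := by
  have hinit : MM.init = St2.q0 := rfl
  have hrun : (RTQ.runAux MM (RTQ.TSym.lend :: (w.map RTQ.TSym.sym ++ [RTQ.TSym.rend]))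
      (Finsupp.single ((MM.init, []) : Cfg) 1, 0, 0)).2
      = ((0:ℝ) + 0 + (if fin1 w ∈ MM.acc then 1/3 else 0) + (if fin2 w ∈ MM.acc then 1/3 else 0),
         (0:ℝ) + 1/3 + (if fin1 w ∈ MM.rej then 1/3 else 0) + (if fin2 w ∈ MM.rej then 1/3 else 0)) := by
    rw [hinit, RTQ.runAux]
    have hv : RTQ.stepSup MM RTQ.TSym.lend (Finsupp.single ((St2.q0, []) : Cfg) 1)
        = Finsupp.single ((St2.qr, []) : Cfg) kk
          + Finsupp.single ((St2.q1, []) : Cfg) kk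
          + Finsupp.single ((St2.q2, []) : Cfg) kk := by
      rw [stepSup_single, one_smul, stepConf_init]
    rw [hv]
    have hacc : RTQ.accMass MM (Finsupp.single ((St2.qr, []) : Cfg) kk
        + Finsupp.single ((St2.q1, []) : Cfg) kk
        + Finsupp.single ((St2.q2, []) : Cfg) kk) = 0 := by
      apply accMass_triple <;> first | decide | (rw [MMacc]; decide)
    have hproj : RTQ.projNon MM (Finsupp.single ((St2.qr, []) : Cfg) kk
        + Finsupp.single ((St2.q1, []) : Cfg) kk
        + Finsupp.single ((St2.q2, []) : Cfg) kk)
        = Finsupp.single ((St2.q1, []) : Cfg) kk + Finsupp.single ((St2.q2, []) : Cfg) kk := by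
      rw [projNon_add, projNon_add,
        projNon_single_neg _ kk (by rw [MMacc, MMrej]; decide),
        projNon_single_pos _ kk (by rw [MMacc, MMrej]; decide),
        projNon_single_pos _ kk (by rw [MMacc, MMrej]; decide), zero_add]
    rw [hacc, rejMass_init, hproj]
    rw [keyTwo (w.map RTQ.TSym.sym ++ [RTQ.TSym.rend]) ((St2.q1, []) : Cfg)
      ((St2.q2, []) : Cfg) (0 + 0) (0 + 1/3) (Or.inl rfl) (Or.inl rfl)]
    rw [Prod.mk.injEq]
    exact ⟨by rw [fin1, fin2], by rw [fin1, fin2]⟩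
  constructor
  · rw [RTQ.acceptProb]
    rw [show ∀ p : (Cfg →₀ ℂ) × ℝ × ℝ, p.2.1 = (p.2).1 from fun _ => rfl]
    rw [hrun]
    ring
  · rw [RTQ.rejectProb]
    rw [show ∀ p : (Cfg →₀ ℂ) × ℝ × ℝ, p.2.2 = (p.2).2 from fun _ => rfl]
    rw [hrun]
    ring

def P1 (cf : Cfg) : Prop := good1 cf ∨ cf.1 = St2.qacc1 ∨ cf.1 = St2.qr
def P2 (cf : Cfg) : Prop := good2 cf ∨ cf.1 = St2.qacc2 ∨ cf.1 = St2.qr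

lemma P1_pres (cf : Cfg) (σ : RTQ.TSym AB01C) (h : P1 cf) : P1 (detStep cf σ) := by
  rcases h with h | h | h
  · rcases class1 cf.1 cf.2 σ h with h' | h' | ⟨h', _⟩
    · exact Or.inl h'
    · exact Or.inr (Or.inl h')
    · exact Or.inr (Or.inr h')
  · exact Or.inr (Or.inl ((detStep_halt cf σ (Or.inr (Or.inl h))).trans h))
  · exact Or.inr (Or.inr ((detStep_halt cf σ (Or.inl h)).trans h))

lemma P2_pres (cf : Cfg) (σ : RTQ.TSym AB01C) (h : P2 cf) : P2 (detStep cf σ) := by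
  rcases h with h | h | h
  · rcases class2 cf.1 cf.2 σ h with h' | h' | ⟨h', _⟩
    · exact Or.inl h'
    · exact Or.inr (Or.inl h')
    · exact Or.inr (Or.inr h')
  · exact Or.inr (Or.inl ((detStep_halt cf σ (Or.inr (Or.inr h))).trans h))
  · exact Or.inr (Or.inr ((detStep_halt cf σ (Or.inl h)).trans h))

lemma P1_fold (u : List (RTQ.TSym AB01C)) : ∀ cf : Cfg, P1 cf → P1 (dRun cf u) := by
  induction u with
  | nil => intro cf h; exact h
  | cons σ rest ih => intro cf h; exact ih _ (P1_pres cf σ h)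

lemma P2_fold (u : List (RTQ.TSym AB01C)) : ∀ cf : Cfg, P2 cf → P2 (dRun cf u) := by
  induction u with
  | nil => intro cf h; exact h
  | cons σ rest ih => intro cf h; exact ih _ (P2_pres cf σ h)

lemma fin1_cases (w : List AB01C) : fin1 w = St2.qacc1 ∨ fin1 w = St2.qr := by
  rw [fin1, dRun, List.foldl_append]
  have hmid : P1 (dRun ((St2.q1, []) : Cfg) (w.map RTQ.TSym.sym)) :=
    P1_fold _ _ (Or.inl (Or.inl rfl))
  set mid := dRun ((St2.q1, []) : Cfg) (w.map RTQ.TSym.sym) with hm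
  show (detStep mid RTQ.TSym.rend).1 = St2.qacc1 ∨ (detStep mid RTQ.TSym.rend).1 = St2.qr
  rcases hmid with h | h | h
  · obtain ⟨q, l⟩ := mid
    rcases h with h | h <;> (dsimp only at h; subst h) <;> rcases l with _ | ⟨hd, t⟩ <;>
      simp [detStep, Tf]
  · exact Or.inl ((detStep_halt mid RTQ.TSym.rend (Or.inr (Or.inl h))).trans h)
  · exact Or.inr ((detStep_halt mid RTQ.TSym.rend (Or.inl h)).trans h)

lemma fin2_cases (w : List AB01C) : fin2 w = St2.qacc2 ∨ fin2 w = St2.qr := by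
  rw [fin2, dRun, List.foldl_append]
  have hmid : P2 (dRun ((St2.q2, []) : Cfg) (w.map RTQ.TSym.sym)) :=
    P2_fold _ _ (Or.inl (Or.inl rfl))
  set mid := dRun ((St2.q2, []) : Cfg) (w.map RTQ.TSym.sym) with hm
  show (detStep mid RTQ.TSym.rend).1 = St2.qacc2 ∨ (detStep mid RTQ.TSym.rend).1 = St2.qr
  rcases hmid with h | h | h
  · obtain ⟨q, l⟩ := mid
    rcases h with h | h <;> (dsimp only at h; subst h) <;> rcases l with _ | ⟨hd, t⟩ <;>
      simp [detStep, Tf]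
  · exact Or.inl ((detStep_halt mid RTQ.TSym.rend (Or.inr (Or.inr h))).trans h)
  · exact Or.inr ((detStep_halt mid RTQ.TSym.rend (Or.inl h)).trans h)

end Stage4
section Stage5
open RTQ St2 QAB RTQ.TSym RTQ.QOp AB01C

def abPart : List AB01C → List QAB :=
  List.filterMap fun s => match s with
    | AB01C.a => some QAB.A
    | AB01C.b => some QAB.B
    | _ => none

def decD : QAB → AB01C
  | QAB.A => AB01C.z
  | QAB.B => AB01C.o

def onlyAB (v : List AB01C) : Prop := ∀ s ∈ v, s = AB01C.a ∨ s = AB01C.b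
def onlyD (v : List AB01C) : Prop := ∀ s ∈ v, s = AB01C.z ∨ s = AB01C.o

@[simp] lemma abPart_nil : abPart [] = [] := rfl
@[simp] lemma abPart_cons_a (v : List AB01C) : abPart (AB01C.a :: v) = QAB.A :: abPart v := rfl
@[simp] lemma abPart_cons_b (v : List AB01C) : abPart (AB01C.b :: v) = QAB.B :: abPart v := rfl
@[simp] lemma abPart_cons_z (v : List AB01C) : abPart (AB01C.z :: v) = abPart v := rfl
@[simp] lemma abPart_cons_o (v : List AB01C) : abPart (AB01C.o :: v) = abPart v := rfl
@[simp] lemma abPart_cons_c (v : List AB01C) : abPart (AB01C.c :: v) = abPart v := rfl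

lemma dRun_qr (u : List (RTQ.TSym AB01C)) (l : List QAB) :
    (dRun ((St2.qr, l) : Cfg) u).1 = St2.qr := dRun_halt u _ (Or.inl rfl)

lemma char_q3 (v : List AB01C) : ∀ l : List QAB,
    ((dRun ((St2.q3, l) : Cfg) (v.map RTQ.TSym.sym ++ [RTQ.TSym.rend])).1 = St2.qacc1
      ↔ (AB01C.c ∉ v ∧ abPart v = l)) := by
  induction v with
  | nil =>
      intro l
      rcases l with _ | ⟨hd, t⟩ <;> simp [dRun, detStep, Tf, RTQ.applyOp, eq_comm]
  | cons s v' ih =>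
      intro l
      rw [List.map_cons, List.cons_append, dRun_cons]
      cases s
      case a =>
        rcases l with _ | ⟨_ | _, t⟩
        · rw [show detStep ((St2.q3, ([] : List QAB)) : Cfg) (RTQ.TSym.sym AB01C.a)
            = ((St2.qr, [QAB.A]) : Cfg) from rfl]
          simp [dRun_qr]
        · rw [show detStep ((St2.q3, QAB.A :: t) : Cfg) (RTQ.TSym.sym AB01C.a)
            = ((St2.q3, t ++ []) : Cfg) from rfl, List.append_nil]
          rw [ih t]
          simp
        · rw [show detStep ((St2.q3, QAB.B :: t) : Cfg) (RTQ.TSym.sym AB01C.a)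
            = ((St2.qr, t ++ [QAB.A]) : Cfg) from rfl]
          simp [dRun_qr]
      case b =>
        rcases l with _ | ⟨_ | _, t⟩
        · rw [show detStep ((St2.q3, ([] : List QAB)) : Cfg) (RTQ.TSym.sym AB01C.b)
            = ((St2.qr, [QAB.A]) : Cfg) from rfl]
          simp [dRun_qr]
        · rw [show detStep ((St2.q3, QAB.A :: t) : Cfg) (RTQ.TSym.sym AB01C.b)
            = ((St2.qr, t ++ [QAB.A]) : Cfg) from rfl]
          simp [dRun_qr]
        · rw [show detStep ((St2.q3, QAB.B :: t) : Cfg) (RTQ.TSym.sym AB01C.b)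
            = ((St2.q3, t ++ []) : Cfg) from rfl, List.append_nil]
          rw [ih t]
          simp
      case z =>
        rw [show detStep ((St2.q3, l) : Cfg) (RTQ.TSym.sym AB01C.z)
            = ((St2.q3, l ++ []) : Cfg) from rfl, List.append_nil]
        rw [ih l]
        simp
      case o =>
        rw [show detStep ((St2.q3, l) : Cfg) (RTQ.TSym.sym AB01C.o)
            = ((St2.q3, l ++ []) : Cfg) from rfl, List.append_nil]
        rw [ih l]
        simp
      case c =>
        rw [show detStep ((St2.q3, l) : Cfg) (RTQ.TSym.sym AB01C.c)
            = ((St2.qr, l.tail ++ [QAB.A]) : Cfg) from rfl]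
        simp [dRun_qr]

lemma char_q4 (v : List AB01C) : ∀ l : List QAB,
    ((dRun ((St2.q4, l) : Cfg) (v.map RTQ.TSym.sym ++ [RTQ.TSym.rend])).1 = St2.qacc2
      ↔ (∃ v2, v = l.map decD ++ v2 ∧ onlyAB v2)) := by
  induction v with
  | nil =>
      intro l
      rcases l with _ | ⟨hd, t⟩ <;>
        simp [dRun, detStep, Tf, RTQ.applyOp, onlyAB, List.append_eq_nil_iff]
  | cons s v' ih =>
      intro l
      rw [List.map_cons, List.cons_append, dRun_cons]
      cases s
      case z =>
        rcases l with _ | ⟨_ | _, t⟩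
        · rw [show detStep ((St2.q4, ([] : List QAB)) : Cfg) (RTQ.TSym.sym AB01C.z)
            = ((St2.qr, [QAB.B]) : Cfg) from rfl]
          simp only [dRun_qr, List.map_nil, List.nil_append]
          constructor
          · intro h; cases h
          · rintro ⟨v2, rfl, h2⟩
            rcases h2 AB01C.z (by simp) with h | h <;> cases h
        · rw [show detStep ((St2.q4, QAB.A :: t) : Cfg) (RTQ.TSym.sym AB01C.z)
            = ((St2.q4, t ++ []) : Cfg) from rfl, List.append_nil]
          rw [ih t]
          constructor
          · rintro ⟨v2, rfl, h2⟩; exact ⟨v2, by simp [decD], h2⟩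
          · rintro ⟨v2, he, h2⟩
            rw [List.map_cons] at he
            exact ⟨v2, by simpa [decD] using he, h2⟩
        · rw [show detStep ((St2.q4, QAB.B :: t) : Cfg) (RTQ.TSym.sym AB01C.z)
            = ((St2.qr, t ++ [QAB.B]) : Cfg) from rfl]
          simp only [dRun_qr, List.map_cons]
          constructor
          · intro h; cases h
          · rintro ⟨v2, he, h2⟩
            rw [show decD QAB.B = AB01C.o from rfl] at he
            cases he
      case o =>
        rcases l with _ | ⟨_ | _, t⟩
        · rw [show detStep ((St2.q4, ([] : List QAB)) : Cfg) (RTQ.TSym.sym AB01C.o)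
            = ((St2.qr, [QAB.B]) : Cfg) from rfl]
          simp only [dRun_qr, List.map_nil, List.nil_append]
          constructor
          · intro h; cases h
          · rintro ⟨v2, rfl, h2⟩
            rcases h2 AB01C.o (by simp) with h | h <;> cases h
        · rw [show detStep ((St2.q4, QAB.A :: t) : Cfg) (RTQ.TSym.sym AB01C.o)
            = ((St2.qr, t ++ [QAB.B]) : Cfg) from rfl]
          simp only [dRun_qr, List.map_cons]
          constructor
          · intro h; cases h
          · rintro ⟨v2, he, h2⟩
            rw [show decD QAB.A = AB01C.z from rfl] at he
            cases he
        · rw [show detStep ((St2.q4, QAB.B :: t) : Cfg) (RTQ.TSym.sym AB01C.o)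
            = ((St2.q4, t ++ []) : Cfg) from rfl, List.append_nil]
          rw [ih t]
          constructor
          · rintro ⟨v2, rfl, h2⟩; exact ⟨v2, by simp [decD], h2⟩
          · rintro ⟨v2, he, h2⟩
            rw [List.map_cons] at he
            exact ⟨v2, by simpa [decD] using he, h2⟩
      case a =>
        rcases l with _ | ⟨hd, t⟩
        · rw [show detStep ((St2.q4, ([] : List QAB)) : Cfg) (RTQ.TSym.sym AB01C.a)
            = ((St2.q4, ([] : List QAB) ++ []) : Cfg) from rfl, List.nil_append]
          rw [ih []]
          simp only [List.map_nil, List.nil_append]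
          constructor
          · rintro ⟨v2, he2, h2⟩
            refine ⟨AB01C.a :: v2, by rw [he2], ?_⟩
            intro s hs
            rcases List.mem_cons.mp hs with rfl | hs
            · exact Or.inl rfl
            · exact h2 s hs
          · rintro ⟨v2, he, h2⟩
            rcases v2 with _ | ⟨s2, v2'⟩
            · cases he
            · rcases List.cons.injEq .. ▸ he with ⟨⟩
              injection he with h1 h2'
              subst h1
              exact ⟨v2', h2'.symm ▸ rfl, fun s hs => h2 s (List.mem_cons_of_mem _ hs)⟩
        · cases hd
          · rw [show detStep ((St2.q4, QAB.A :: t) : Cfg) (RTQ.TSym.sym AB01C.a)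
              = ((St2.qr, t ++ [QAB.B]) : Cfg) from rfl]
            simp only [dRun_qr, List.map_cons]
            constructor
            · intro h; cases h
            · rintro ⟨v2, he, h2⟩
              rw [show decD QAB.A = AB01C.z from rfl] at he
              cases he
          · rw [show detStep ((St2.q4, QAB.B :: t) : Cfg) (RTQ.TSym.sym AB01C.a)
              = ((St2.qr, t ++ [QAB.B]) : Cfg) from rfl]
            simp only [dRun_qr, List.map_cons]
            constructor
            · intro h; cases h
            · rintro ⟨v2, he, h2⟩
              rw [show decD QAB.B = AB01C.o from rfl] at he
              cases he
      case b =>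
        rcases l with _ | ⟨hd, t⟩
        · rw [show detStep ((St2.q4, ([] : List QAB)) : Cfg) (RTQ.TSym.sym AB01C.b)
            = ((St2.q4, ([] : List QAB) ++ []) : Cfg) from rfl, List.nil_append]
          rw [ih []]
          simp only [List.map_nil, List.nil_append]
          constructor
          · rintro ⟨v2, he2, h2⟩
            refine ⟨AB01C.b :: v2, by rw [he2], ?_⟩
            intro s hs
            rcases List.mem_cons.mp hs with rfl | hs
            · exact Or.inr rfl
            · exact h2 s hs
          · rintro ⟨v2, he, h2⟩
            rcases v2 with _ | ⟨s2, v2'⟩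
            · cases he
            · injection he with h1 h2'
              subst h1
              exact ⟨v2', h2'.symm ▸ rfl, fun s hs => h2 s (List.mem_cons_of_mem _ hs)⟩
        · cases hd
          · rw [show detStep ((St2.q4, QAB.A :: t) : Cfg) (RTQ.TSym.sym AB01C.b)
              = ((St2.qr, t ++ [QAB.B]) : Cfg) from rfl]
            simp only [dRun_qr, List.map_cons]
            constructor
            · intro h; cases h
            · rintro ⟨v2, he, h2⟩
              rw [show decD QAB.A = AB01C.z from rfl] at he
              cases he
          · rw [show detStep ((St2.q4, QAB.B :: t) : Cfg) (RTQ.TSym.sym AB01C.b)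
              = ((St2.qr, t ++ [QAB.B]) : Cfg) from rfl]
            simp only [dRun_qr, List.map_cons]
            constructor
            · intro h; cases h
            · rintro ⟨v2, he, h2⟩
              rw [show decD QAB.B = AB01C.o from rfl] at he
              cases he
      case c =>
        rw [show detStep ((St2.q4, l) : Cfg) (RTQ.TSym.sym AB01C.c)
            = ((St2.qr, l.tail ++ [QAB.B]) : Cfg) from rfl]
        simp only [dRun_qr]
        constructor
        · intro h; cases h
        · rintro ⟨v2, he, h2⟩
          rcases l with _ | ⟨hd, t⟩
          · have hv2 : AB01C.c :: v' = v2 := by simpa using he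
            rcases h2 AB01C.c (by rw [← hv2]; simp) with h | h <;> cases h
          · rw [List.map_cons] at he
            cases hd <;> cases he
end Stage5
section Stage6
open RTQ St2 QAB RTQ.TSym RTQ.QOp AB01C

lemma char_q1 (w : List AB01C) : ∀ l : List QAB,
    ((dRun ((St2.q1, l) : Cfg) (w.map RTQ.TSym.sym ++ [RTQ.TSym.rend])).1 = St2.qacc1
      ↔ ∃ u v, w = u ++ AB01C.c :: v ∧ AB01C.c ∉ u ∧ AB01C.c ∉ v
          ∧ abPart v = l ++ abPart u) := by
  induction w with
  | nil =>
      intro l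
      constructor
      · intro h
        rw [show (dRun ((St2.q1, l) : Cfg)
          (List.map RTQ.TSym.sym [] ++ [RTQ.TSym.rend])).1 = St2.qr from rfl] at h
        cases h
      · rintro ⟨u, v, he, -, -, -⟩
        rcases u with _ | ⟨s', u'⟩ <;> cases he
  | cons s w' ih =>
      intro l
      rw [List.map_cons, List.cons_append, dRun_cons]
      cases s
      case c =>
        rw [show detStep ((St2.q1, l) : Cfg) (RTQ.TSym.sym AB01C.c)
          = ((St2.q3, l ++ []) : Cfg) from rfl, List.append_nil]
        rw [char_q3 w' l]
        constructor
        · rintro ⟨h1, h2⟩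
          exact ⟨[], w', rfl, by simp, h1, by simpa using h2⟩
        · rintro ⟨u, v, he, hcu, hcv, hab⟩
          rcases u with _ | ⟨s', u'⟩
          · injection he with h1 h2
            subst h2
            exact ⟨hcv, by simpa using hab⟩
          · rw [List.cons_append] at he
            injection he with h1 h2
            exact absurd (show AB01C.c ∈ s' :: u' by rw [← h1]; exact List.mem_cons_self) hcu
      case a =>
        rw [show detStep ((St2.q1, l) : Cfg) (RTQ.TSym.sym AB01C.a)
          = ((St2.q1, l ++ [QAB.A]) : Cfg) from rfl]
        rw [ih (l ++ [QAB.A])]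
        constructor
        · rintro ⟨u, v, he, hcu, hcv, hab⟩
          refine ⟨AB01C.a :: u, v, by rw [he, List.cons_append], by simp [hcu], hcv, ?_⟩
          rw [hab]; simp
        · rintro ⟨u, v, he, hcu, hcv, hab⟩
          rcases u with _ | ⟨s', u'⟩
          · cases he
          · rw [List.cons_append] at he
            injection he with h1 h2
            subst h1
            refine ⟨u', v, h2, fun hm => hcu (List.mem_cons_of_mem _ hm), hcv, ?_⟩
            rw [hab]; simp
      case b =>
        rw [show detStep ((St2.q1, l) : Cfg) (RTQ.TSym.sym AB01C.b)
          = ((St2.q1, l ++ [QAB.B]) : Cfg) from rfl]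
        rw [ih (l ++ [QAB.B])]
        constructor
        · rintro ⟨u, v, he, hcu, hcv, hab⟩
          refine ⟨AB01C.b :: u, v, by rw [he, List.cons_append], by simp [hcu], hcv, ?_⟩
          rw [hab]; simp
        · rintro ⟨u, v, he, hcu, hcv, hab⟩
          rcases u with _ | ⟨s', u'⟩
          · cases he
          · rw [List.cons_append] at he
            injection he with h1 h2
            subst h1
            refine ⟨u', v, h2, fun hm => hcu (List.mem_cons_of_mem _ hm), hcv, ?_⟩
            rw [hab]; simp
      case z =>
        rw [show detStep ((St2.q1, l) : Cfg) (RTQ.TSym.sym AB01C.z)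
          = ((St2.q1, l ++ []) : Cfg) from rfl, List.append_nil]
        rw [ih l]
        constructor
        · rintro ⟨u, v, he, hcu, hcv, hab⟩
          exact ⟨AB01C.z :: u, v, by rw [he, List.cons_append], by simp [hcu], hcv, by rw [hab]; simp⟩
        · rintro ⟨u, v, he, hcu, hcv, hab⟩
          rcases u with _ | ⟨s', u'⟩
          · cases he
          · rw [List.cons_append] at he
            injection he with h1 h2
            subst h1
            exact ⟨u', v, h2, fun hm => hcu (List.mem_cons_of_mem _ hm), hcv,
              by rw [hab]; simp⟩
      case o =>
        rw [show detStep ((St2.q1, l) : Cfg) (RTQ.TSym.sym AB01C.o)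
          = ((St2.q1, l ++ []) : Cfg) from rfl, List.append_nil]
        rw [ih l]
        constructor
        · rintro ⟨u, v, he, hcu, hcv, hab⟩
          exact ⟨AB01C.o :: u, v, by rw [he, List.cons_append], by simp [hcu], hcv, by rw [hab]; simp⟩
        · rintro ⟨u, v, he, hcu, hcv, hab⟩
          rcases u with _ | ⟨s', u'⟩
          · cases he
          · rw [List.cons_append] at he
            injection he with h1 h2
            subst h1
            exact ⟨u', v, h2, fun hm => hcu (List.mem_cons_of_mem _ hm), hcv,
              by rw [hab]; simp⟩

lemma char_q2 (w : List AB01C) : ∀ l : List QAB,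
    ((dRun ((St2.q2, l) : Cfg) (w.map RTQ.TSym.sym ++ [RTQ.TSym.rend])).1 = St2.qacc2
      ↔ ∃ u1 u2 v2, w = u1 ++ u2 ++ AB01C.c :: (l.map decD ++ u2 ++ v2)
          ∧ onlyAB u1 ∧ onlyD u2 ∧ onlyAB v2 ∧ (u1 = [] ∨ l = [])) := by
  induction w with
  | nil =>
      intro l
      constructor
      · intro h
        rw [show (dRun ((St2.q2, l) : Cfg)
          (List.map RTQ.TSym.sym [] ++ [RTQ.TSym.rend])).1 = St2.qr from rfl] at h
        cases h
      · rintro ⟨u1, u2, v2, he, -, -, -, -⟩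
        rcases u1 with _ | ⟨s1, t1⟩ <;> rcases u2 with _ | ⟨s2, t2⟩ <;> cases he
  | cons s w' ih =>
      intro l
      rw [List.map_cons, List.cons_append, dRun_cons]
      cases s
      case c =>
        rw [show detStep ((St2.q2, l) : Cfg) (RTQ.TSym.sym AB01C.c)
          = ((St2.q4, l ++ []) : Cfg) from rfl, List.append_nil]
        rw [char_q4 w' l]
        constructor
        · rintro ⟨v2, he, h3⟩
          exact ⟨[], [], v2, by simp [he], by simp [onlyAB], by simp [onlyD], h3, Or.inl rfl⟩
        · rintro ⟨u1, u2, v2, he, h1, h2, h3, h4⟩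
          rcases u1 with _ | ⟨s1, t1⟩
          · rcases u2 with _ | ⟨s2, t2⟩
            · rw [List.nil_append, List.nil_append] at he
              injection he with h1' h2'
              exact ⟨v2, by simpa using h2', h3⟩
            · rw [List.nil_append, List.cons_append] at he
              injection he with h1' h2'
              rcases h2 s2 (List.mem_cons_self) with rfl | rfl <;> cases h1'
          · rw [List.cons_append, List.cons_append] at he
            injection he with h1' h2'
            rcases h1 s1 (List.mem_cons_self) with rfl | rfl <;> cases h1'
      case z =>
        rw [show detStep ((St2.q2, l) : Cfg) (RTQ.TSym.sym AB01C.z)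
          = ((St2.q2, l ++ [QAB.A]) : Cfg) from rfl]
        rw [ih (l ++ [QAB.A])]
        constructor
        · rintro ⟨u1, u2, v2, he, h1, h2, h3, h4⟩
          have hu1 : u1 = [] := by
            rcases h4 with h | h
            · exact h
            · exact absurd h (by simp)
          subst hu1
          refine ⟨[], AB01C.z :: u2, v2, ?_, by simp [onlyAB], ?_, h3, Or.inl rfl⟩
          · simp [he, decD, List.append_assoc]
          · intro x hx
            rcases List.mem_cons.mp hx with rfl | hx
            · exact Or.inl rfl
            · exact h2 x hx
        · rintro ⟨u1, u2, v2, he, h1, h2, h3, h4⟩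
          rcases u1 with _ | ⟨s1, t1⟩
          · rcases u2 with _ | ⟨s2, t2⟩
            · rw [List.nil_append, List.nil_append] at he
              cases he
            · rw [List.nil_append, List.cons_append] at he
              injection he with h1' h2'
              have hs2 : s2 = AB01C.z := by
                rcases h2 s2 (List.mem_cons_self) with rfl | rfl
                · rfl
                · cases h1'
              subst hs2
              refine ⟨[], t2, v2, ?_, by simp [onlyAB],
                fun x hx => h2 x (List.mem_cons_of_mem _ hx), h3, Or.inl rfl⟩
              rw [List.nil_append, h2']
              simp [decD]
          · rw [List.cons_append, List.cons_append] at he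
            injection he with h1' h2'
            rcases h1 s1 (List.mem_cons_self) with rfl | rfl <;> cases h1'
      case o =>
        rw [show detStep ((St2.q2, l) : Cfg) (RTQ.TSym.sym AB01C.o)
          = ((St2.q2, l ++ [QAB.B]) : Cfg) from rfl]
        rw [ih (l ++ [QAB.B])]
        constructor
        · rintro ⟨u1, u2, v2, he, h1, h2, h3, h4⟩
          have hu1 : u1 = [] := by
            rcases h4 with h | h
            · exact h
            · exact absurd h (by simp)
          subst hu1
          refine ⟨[], AB01C.o :: u2, v2, ?_, by simp [onlyAB], ?_, h3, Or.inl rfl⟩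
          · simp [he, decD, List.append_assoc]
          · intro x hx
            rcases List.mem_cons.mp hx with rfl | hx
            · exact Or.inr rfl
            · exact h2 x hx
        · rintro ⟨u1, u2, v2, he, h1, h2, h3, h4⟩
          rcases u1 with _ | ⟨s1, t1⟩
          · rcases u2 with _ | ⟨s2, t2⟩
            · rw [List.nil_append, List.nil_append] at he
              cases he
            · rw [List.nil_append, List.cons_append] at he
              injection he with h1' h2'
              have hs2 : s2 = AB01C.o := by
                rcases h2 s2 (List.mem_cons_self) with rfl | rfl
                · cases h1'
                · rfl
              subst hs2
              refine ⟨[], t2, v2, ?_, by simp [onlyAB],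
                fun x hx => h2 x (List.mem_cons_of_mem _ hx), h3, Or.inl rfl⟩
              rw [List.nil_append, h2']
              simp [decD]
          · rw [List.cons_append, List.cons_append] at he
            injection he with h1' h2'
            rcases h1 s1 (List.mem_cons_self) with rfl | rfl <;> cases h1'
      case a =>
        rcases l with _ | ⟨hd, t⟩
        · rw [show detStep ((St2.q2, ([] : List QAB)) : Cfg) (RTQ.TSym.sym AB01C.a)
            = ((St2.q2, ([] : List QAB) ++ []) : Cfg) from rfl, List.nil_append]
          rw [ih []]
          constructor
          · rintro ⟨u1, u2, v2, he, h1, h2, h3, h4⟩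
            refine ⟨AB01C.a :: u1, u2, v2, by simp [he, List.append_assoc], ?_, h2, h3, Or.inr rfl⟩
            intro x hx
            rcases List.mem_cons.mp hx with rfl | hx
            · exact Or.inl rfl
            · exact h1 x hx
          · rintro ⟨u1, u2, v2, he, h1, h2, h3, h4⟩
            rcases u1 with _ | ⟨s1, t1⟩
            · rcases u2 with _ | ⟨s2, t2⟩
              · rw [List.nil_append, List.nil_append] at he
                cases he
              · rw [List.nil_append, List.cons_append] at he
                injection he with h1' h2'
                rcases h2 s2 (List.mem_cons_self) with rfl | rfl <;> cases h1'
            · rw [List.cons_append, List.cons_append] at he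
              injection he with h1' h2'
              subst h1'
              exact ⟨t1, u2, v2, h2', fun x hx => h1 x (List.mem_cons_of_mem _ hx),
                h2, h3, Or.inr rfl⟩
        · rw [show detStep ((St2.q2, hd :: t) : Cfg) (RTQ.TSym.sym AB01C.a)
            = ((St2.qr, (hd :: t) ++ [QAB.B]) : Cfg) from rfl]
          simp only [dRun_qr]
          constructor
          · intro h; cases h
          · rintro ⟨u1, u2, v2, he, h1, h2, h3, h4⟩
            have hu1 : u1 = [] := by
              rcases h4 with h | h
              · exact h
              · cases h
            subst hu1
            rcases u2 with _ | ⟨s2, t2⟩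
            · rw [List.nil_append, List.nil_append] at he
              cases he
            · rw [List.nil_append, List.cons_append] at he
              injection he with h1' h2'
              rcases h2 s2 (List.mem_cons_self) with rfl | rfl <;> cases h1'
      case b =>
        rcases l with _ | ⟨hd, t⟩
        · rw [show detStep ((St2.q2, ([] : List QAB)) : Cfg) (RTQ.TSym.sym AB01C.b)
            = ((St2.q2, ([] : List QAB) ++ []) : Cfg) from rfl, List.nil_append]
          rw [ih []]
          constructor
          · rintro ⟨u1, u2, v2, he, h1, h2, h3, h4⟩
            refine ⟨AB01C.b :: u1, u2, v2, by simp [he, List.append_assoc], ?_, h2, h3, Or.inr rfl⟩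
            intro x hx
            rcases List.mem_cons.mp hx with rfl | hx
            · exact Or.inr rfl
            · exact h1 x hx
          · rintro ⟨u1, u2, v2, he, h1, h2, h3, h4⟩
            rcases u1 with _ | ⟨s1, t1⟩
            · rcases u2 with _ | ⟨s2, t2⟩
              · rw [List.nil_append, List.nil_append] at he
                cases he
              · rw [List.nil_append, List.cons_append] at he
                injection he with h1' h2'
                rcases h2 s2 (List.mem_cons_self) with rfl | rfl <;> cases h1'
            · rw [List.cons_append, List.cons_append] at he
              injection he with h1' h2'
              subst h1'
              exact ⟨t1, u2, v2, h2', fun x hx => h1 x (List.mem_cons_of_mem _ hx),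
                h2, h3, Or.inr rfl⟩
        · rw [show detStep ((St2.q2, hd :: t) : Cfg) (RTQ.TSym.sym AB01C.b)
            = ((St2.qr, (hd :: t) ++ [QAB.B]) : Cfg) from rfl]
          simp only [dRun_qr]
          constructor
          · intro h; cases h
          · rintro ⟨u1, u2, v2, he, h1, h2, h3, h4⟩
            have hu1 : u1 = [] := by
              rcases h4 with h | h
              · exact h
              · cases h
            subst hu1
            rcases u2 with _ | ⟨s2, t2⟩
            · rw [List.nil_append, List.nil_append] at he
              cases he
            · rw [List.nil_append, List.cons_append] at he
              injection he with h1' h2'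
              rcases h2 s2 (List.mem_cons_self) with rfl | rfl <;> cases h1'

lemma acc1_iff (w : List AB01C) :
    fin1 w = St2.qacc1 ↔ ∃ u v, w = u ++ AB01C.c :: v ∧ AB01C.c ∉ u ∧ AB01C.c ∉ v
      ∧ abPart v = abPart u := by
  rw [fin1, char_q1 w []]
  simp

lemma acc2_iff (w : List AB01C) :
    fin2 w = St2.qacc2 ↔ ∃ u1 u2 v2, w = u1 ++ u2 ++ AB01C.c :: (u2 ++ v2)
      ∧ onlyAB u1 ∧ onlyD u2 ∧ onlyAB v2 := by
  rw [fin2, char_q2 w []]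
  constructor
  · rintro ⟨u1, u2, v2, he, h1, h2, h3, -⟩
    exact ⟨u1, u2, v2, by simpa using he, h1, h2, h3⟩
  · rintro ⟨u1, u2, v2, he, h1, h2, h3⟩
    exact ⟨u1, u2, v2, by simpa using he, h1, h2, h3, Or.inr rfl⟩
end Stage6
section Stage7
open RTQ St2 QAB RTQ.TSym RTQ.QOp AB01C

lemma split_unique : ∀ (p q s t : List AB01C),
    p ++ AB01C.c :: s = q ++ AB01C.c :: t → AB01C.c ∉ p → AB01C.c ∉ q →
    p = q ∧ s = t := by
  intro p
  induction p with
  | nil =>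
      intro q s t he hp hq
      rcases q with _ | ⟨x, q'⟩
      · injection he with h1 h2
        exact ⟨rfl, h2⟩
      · rw [List.nil_append, List.cons_append] at he
        injection he with h1 h2
        exact absurd (show AB01C.c ∈ x :: q' by rw [h1]; exact List.mem_cons_self) hq
  | cons x p' ih =>
      intro q s t he hp hq
      rcases q with _ | ⟨y, q'⟩
      · rw [List.cons_append, List.nil_append] at he
        injection he with h1 h2
        exact absurd (show AB01C.c ∈ x :: p' by rw [← h1]; exact List.mem_cons_self) hp
      · rw [List.cons_append, List.cons_append] at he
        injection he with h1 h2
        subst h1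
        obtain ⟨hpq, hst⟩ := ih q' s t h2 (fun hm => hp (List.mem_cons_of_mem _ hm))
          (fun hm => hq (List.mem_cons_of_mem _ hm))
        exact ⟨by rw [hpq], hst⟩

lemma abPart_append (p q : List AB01C) : abPart (p ++ q) = abPart p ++ abPart q :=
  List.filterMap_append

lemma abPart_onlyD (p : List AB01C) (h : onlyD p) : abPart p = [] := by
  induction p with
  | nil => rfl
  | cons s t ih =>
      rcases h s (List.mem_cons_self) with rfl | rfl <;>
        exact ih fun x hx => h x (List.mem_cons_of_mem _ hx)

lemma abPart_inj : ∀ p q : List AB01C, onlyAB p → onlyAB q → abPart p = abPart q → p = q := by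
  intro p
  induction p with
  | nil =>
      intro q hp hq he
      rcases q with _ | ⟨y, q'⟩
      · rfl
      · rcases hq y (List.mem_cons_self) with rfl | rfl <;> cases he
  | cons x p' ih =>
      intro q hp hq he
      rcases q with _ | ⟨y, q'⟩
      · rcases hp x (List.mem_cons_self) with rfl | rfl <;> cases he
      · have hx := hp x (List.mem_cons_self)
        have hy := hq y (List.mem_cons_self)
        have hp' : onlyAB p' := fun s hs => hp s (List.mem_cons_of_mem _ hs)
        have hq' : onlyAB q' := fun s hs => hq s (List.mem_cons_of_mem _ hs)
        rcases hx with rfl | rfl <;> rcases hy with rfl | rfl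
        · simp only [abPart_cons_a] at he
          injection he with h1 h2
          rw [ih q' hp' hq' h2]
        · simp only [abPart_cons_a, abPart_cons_b] at he
          injection he with h1 h2
          cases h1
        · simp only [abPart_cons_a, abPart_cons_b] at he
          injection he with h1 h2
          cases h1
        · simp only [abPart_cons_b] at he
          injection he with h1 h2
          rw [ih q' hp' hq' h2]

lemma onlyAB_encAB (x : List Bool) : onlyAB (encAB x) := by
  intro s hs
  rw [encAB] at hs
  rcases List.mem_map.mp hs with ⟨t, -, rfl⟩
  cases t <;> simp

lemma onlyD_enc01 (y : List Bool) : onlyD (enc01 y) := by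
  intro s hs
  rw [enc01] at hs
  rcases List.mem_map.mp hs with ⟨t, -, rfl⟩
  cases t <;> simp

lemma c_not_onlyAB (p : List AB01C) (h : onlyAB p) : AB01C.c ∉ p := by
  intro hm
  rcases h _ hm with h' | h' <;> cases h'

lemma c_not_onlyD (p : List AB01C) (h : onlyD p) : AB01C.c ∉ p := by
  intro hm
  rcases h _ hm with h' | h' <;> cases h'

lemma onlyAB_exists (p : List AB01C) (h : onlyAB p) : ∃ x : List Bool, p = encAB x := by
  induction p with
  | nil => exact ⟨[], rfl⟩
  | cons s t ih =>
      obtain ⟨x, hx⟩ := ih fun s' hs' => h s' (List.mem_cons_of_mem _ hs')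
      rcases h s (List.mem_cons_self) with rfl | rfl
      · exact ⟨true :: x, by rw [encAB, List.map_cons, ← encAB, ← hx]; rfl⟩
      · exact ⟨false :: x, by rw [encAB, List.map_cons, ← encAB, ← hx]; rfl⟩

lemma onlyD_exists (p : List AB01C) (h : onlyD p) : ∃ y : List Bool, p = enc01 y := by
  induction p with
  | nil => exact ⟨[], rfl⟩
  | cons s t ih =>
      obtain ⟨y, hy⟩ := ih fun s' hs' => h s' (List.mem_cons_of_mem _ hs')
      rcases h s (List.mem_cons_self) with rfl | rfl
      · exact ⟨false :: y, by rw [enc01, List.map_cons, ← enc01, ← hy]; rfl⟩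
      · exact ⟨true :: y, by rw [enc01, List.map_cons, ← enc01, ← hy]; rfl⟩

lemma member_accept (w : List AB01C) (hw : w ∈ Lxy) :
    fin1 w = St2.qacc1 ∧ fin2 w = St2.qacc2 := by
  obtain ⟨x, y, rfl⟩ := hw
  constructor
  · rw [acc1_iff]
    refine ⟨encAB x ++ enc01 y, enc01 y ++ encAB x, by simp [List.append_assoc], ?_, ?_, ?_⟩
    · intro hm
      rcases List.mem_append.mp hm with hm | hm
      · exact c_not_onlyAB _ (onlyAB_encAB x) hm
      · exact c_not_onlyD _ (onlyD_enc01 y) hm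
    · intro hm
      rcases List.mem_append.mp hm with hm | hm
      · exact c_not_onlyD _ (onlyD_enc01 y) hm
      · exact c_not_onlyAB _ (onlyAB_encAB x) hm
    · rw [abPart_append, abPart_append, abPart_onlyD _ (onlyD_enc01 y)]
      simp
  · rw [acc2_iff]
    exact ⟨encAB x, enc01 y, encAB x, rfl, onlyAB_encAB x, onlyD_enc01 y, onlyAB_encAB x⟩

lemma accept_member (w : List AB01C) (h1 : fin1 w = St2.qacc1) (h2 : fin2 w = St2.qacc2) :
    w ∈ Lxy := by
  obtain ⟨u, v, hw1, hcu, hcv, hab⟩ := (acc1_iff w).mp h1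
  obtain ⟨u1, u2, v2, hw2, hAB1, hD2, hABv⟩ := (acc2_iff w).mp h2
  have heq : u ++ AB01C.c :: v = (u1 ++ u2) ++ AB01C.c :: (u2 ++ v2) := by
    rw [← hw1, hw2]
  have hcu12 : AB01C.c ∉ u1 ++ u2 := by
    intro hm
    rcases List.mem_append.mp hm with hm | hm
    · exact c_not_onlyAB _ hAB1 hm
    · exact c_not_onlyD _ hD2 hm
  obtain ⟨hu, hv⟩ := split_unique u (u1 ++ u2) v (u2 ++ v2) heq hcu hcu12
  have hab' : abPart v2 = abPart u1 := by
    have := hab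
    rw [hu, hv, abPart_append, abPart_append, abPart_onlyD _ hD2] at this
    simpa using this
  have hv2u1 : v2 = u1 := abPart_inj v2 u1 hABv hAB1 hab'
  obtain ⟨x, hx⟩ := onlyAB_exists u1 hAB1
  obtain ⟨y, hy⟩ := onlyD_exists u2 hD2
  exact ⟨x, y, by rw [hw2, hv2u1, hx, hy]⟩
end Stage7

/-- There exists a real-time quantum queue automaton `M` over
input alphabet `Σ = {a, b, 0, 1, c}` with states
`Q = {q₀, q₁, q₂, q₃, q₄, q_acc1, q_acc2, q_r}` and queue alphabet `{A, B}`,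
whose initial transition on the left end-marker `#` splits the computation
into three paths each with amplitude `1/√3` — one path entering the rejecting
state `q_r` immediately, one path (through `q₁, q₃`) enqueueing `A` for each
`a` and `B` for each `b` of the prefix `x` and, after `c`, matching the suffix
`x` against the queue, and one path (through `q₂, q₄`) enqueueing `A` for each
`0` and `B` for each `1` of `y` and, after `c`, matching the second occurrence
of `y` against the queue — such that `M` accepts every string of `L_xy` with
probability 2/3, and rejects every string not in `L_xy` with probability at
least 2/3. -/
theorem Lxy_concrete_rtQQA :
    ∃ M : RTQ.RTQQA St2 QAB AB01C,
      RTQ.WellFormedRT M ∧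
      M.init = St2.q0 ∧
      M.acc = {St2.qacc1, St2.qacc2} ∧
      M.rej = {St2.qr} ∧
      -- the initial transition on the left end-marker # splits the computation
      -- into three paths, each with amplitude 1/√3:
      -- one path enters the rejecting state q_r immediately ...
      M.δ St2.q0 RTQ.TSym.lend none none St2.qr none RTQ.QOp.enq
        = ((Real.sqrt 3 : ℝ) : ℂ)⁻¹ ∧
      -- ... one path goes through q₁ (and later q₃) ...
      M.δ St2.q0 RTQ.TSym.lend none none St2.q1 none RTQ.QOp.enq
        = ((Real.sqrt 3 : ℝ) : ℂ)⁻¹ ∧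
      -- ... and one path goes through q₂ (and later q₄)
      M.δ St2.q0 RTQ.TSym.lend none none St2.q2 none RTQ.QOp.enq
        = ((Real.sqrt 3 : ℝ) : ℂ)⁻¹ ∧
      -- the first path enqueues A for each a and B for each b of the prefix x
      M.δ St2.q1 (RTQ.TSym.sym AB01C.a) none none St2.q1 (some QAB.A)
        RTQ.QOp.enq = 1 ∧
      M.δ St2.q1 (RTQ.TSym.sym AB01C.b) none none St2.q1 (some QAB.B)
        RTQ.QOp.enq = 1 ∧
      (∀ z₁ zl : QAB,
        M.δ St2.q1 (RTQ.TSym.sym AB01C.a) (some z₁) (some zl) St2.q1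
          (some QAB.A) RTQ.QOp.enq = 1) ∧
      (∀ z₁ zl : QAB,
        M.δ St2.q1 (RTQ.TSym.sym AB01C.b) (some z₁) (some zl) St2.q1
          (some QAB.B) RTQ.QOp.enq = 1) ∧
      -- after c (moving to q₃) it matches the suffix x against the queue
      (∀ z₁ zl : QAB,
        M.δ St2.q1 (RTQ.TSym.sym AB01C.c) (some z₁) (some zl) St2.q3 none
          RTQ.QOp.enq = 1) ∧
      (∀ zl : QAB,
        M.δ St2.q3 (RTQ.TSym.sym AB01C.a) (some QAB.A) (some zl) St2.q3 none
          RTQ.QOp.deq = 1) ∧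
      (∀ zl : QAB,
        M.δ St2.q3 (RTQ.TSym.sym AB01C.b) (some QAB.B) (some zl) St2.q3 none
          RTQ.QOp.deq = 1) ∧
      -- the other path enqueues A for each 0 and B for each 1 of y
      M.δ St2.q2 (RTQ.TSym.sym AB01C.z) none none St2.q2 (some QAB.A)
        RTQ.QOp.enq = 1 ∧
      M.δ St2.q2 (RTQ.TSym.sym AB01C.o) none none St2.q2 (some QAB.B)
        RTQ.QOp.enq = 1 ∧
      (∀ z₁ zl : QAB,
        M.δ St2.q2 (RTQ.TSym.sym AB01C.z) (some z₁) (some zl) St2.q2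
          (some QAB.A) RTQ.QOp.enq = 1) ∧
      (∀ z₁ zl : QAB,
        M.δ St2.q2 (RTQ.TSym.sym AB01C.o) (some z₁) (some zl) St2.q2
          (some QAB.B) RTQ.QOp.enq = 1) ∧
      -- after c (moving to q₄) it matches the second occurrence of y against
      -- the queue
      (∀ z₁ zl : QAB,
        M.δ St2.q2 (RTQ.TSym.sym AB01C.c) (some z₁) (some zl) St2.q4 none
          RTQ.QOp.enq = 1) ∧
      (∀ zl : QAB,
        M.δ St2.q4 (RTQ.TSym.sym AB01C.z) (some QAB.A) (some zl) St2.q4 none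
          RTQ.QOp.deq = 1) ∧
      (∀ zl : QAB,
        M.δ St2.q4 (RTQ.TSym.sym AB01C.o) (some QAB.B) (some zl) St2.q4 none
          RTQ.QOp.deq = 1) ∧
      (∀ w : List AB01C, w ∈ Lxy → RTQ.acceptProb M w = 2 / 3) ∧
      (∀ w : List AB01C, w ∉ Lxy → RTQ.rejectProb M w ≥ 2 / 3) := by
  refine ⟨MM, MM_wf, rfl, rfl, rfl, ?_, ?_, ?_, ?_, ?_, ?_, ?_, ?_, ?_, ?_, ?_, ?_,
    ?_, ?_, ?_, ?_, ?_, ?_, ?_⟩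
  · rw [show MM.δ = Mδ from rfl]; simp [Mδ, Spl, kk]
  · rw [show MM.δ = Mδ from rfl]; simp [Mδ, Spl, kk]
  · rw [show MM.δ = Mδ from rfl]; simp [Mδ, Spl, kk]
  · rw [show MM.δ = Mδ from rfl]; simp [Mδ, Tf]
  · rw [show MM.δ = Mδ from rfl]; simp [Mδ, Tf]
  · intro z₁ zl; rw [show MM.δ = Mδ from rfl]; simp [Mδ, Tf]
  · intro z₁ zl; rw [show MM.δ = Mδ from rfl]; simp [Mδ, Tf]
  · intro z₁ zl; rw [show MM.δ = Mδ from rfl]; simp [Mδ, Tf]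
  · intro zl; rw [show MM.δ = Mδ from rfl]; simp [Mδ, Tf]
  · intro zl; rw [show MM.δ = Mδ from rfl]; simp [Mδ, Tf]
  · rw [show MM.δ = Mδ from rfl]; simp [Mδ, Tf]
  · rw [show MM.δ = Mδ from rfl]; simp [Mδ, Tf]
  · intro z₁ zl; rw [show MM.δ = Mδ from rfl]; simp [Mδ, Tf]
  · intro z₁ zl; rw [show MM.δ = Mδ from rfl]; simp [Mδ, Tf]
  · intro z₁ zl; rw [show MM.δ = Mδ from rfl]; simp [Mδ, Tf]
  · intro zl; rw [show MM.δ = Mδ from rfl]; simp [Mδ, Tf]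
  · intro zl; rw [show MM.δ = Mδ from rfl]; simp [Mδ, Tf]
  · intro w hw
    obtain ⟨h1, h2⟩ := member_accept w hw
    rw [(probs_eq w).1, h1, h2]
    rw [if_pos (by rw [MMacc]; decide), if_pos (by rw [MMacc]; decide)]
    norm_num
  · intro w hw
    rw [ge_iff_le, (probs_eq w).2]
    have hnot : ¬(fin1 w = St2.qacc1 ∧ fin2 w = St2.qacc2) := fun ⟨h1, h2⟩ =>
      hw (accept_member w h1 h2)
    rcases fin1_cases w with h1 | h1 <;> rcases fin2_cases w with h2 | h2
    · exact absurd ⟨h1, h2⟩ hnot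
    · rw [h1, h2, if_neg (by rw [MMrej]; decide), if_pos (by rw [MMrej]; decide)]
      norm_num
    · rw [h1, h2, if_pos (by rw [MMrej]; decide), if_neg (by rw [MMrej]; decide)]
      norm_num
    · rw [h1, h2]
      norm_num [MMrej]
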